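/- In the marginal mean estimation setting, take φ₁ to be a measurable version of the regression function, i.e. φ₁(Y) = E(X | Y) almost surely, and assume Var(E(X|Y)) > 0. Then with γ* := n₁·Cov(X, φ₁(Y)) / (n·Var(φ₁(Y))), the CAM estimator satisfies MSE(θ̂_{γ*}) − MSE(θ̂₀) = −(n₁/(n₀·n))·Var(E(X|Y)). -/

import Mathlib

open MeasureTheory ProbabilityTheory Finset
open scoped NNReal ENNReal BigOperators

/-- Covariance of two real random variables. -/
noncomputable def cov {Ωs : Type*} [MeasurableSpace Ωs] (μ : Measure Ωs) (f g : Ωs → ℝ) : ℝ :=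
  ∫ ω, (f ω - ∫ ω', f ω' ∂μ) * (g ω - ∫ ω', g ω' ∂μ) ∂μ

/-- Variance of a real random variable. -/
noncomputable def var {Ωs : Type*} [MeasurableSpace Ωs] (μ : Measure Ωs) (f : Ωs → ℝ) : ℝ :=
  cov μ f f

lemma l2_mul_integrable {Ω : Type*} [MeasurableSpace Ω] {P : Measure Ω} {f g : Ω → ℝ}
    (hf : MemLp f 2 P) (hg : MemLp g 2 P) : Integrable (fun ω => f ω * g ω) P := by
  have h : MemLp (f • g) 1 P := hg.smul hf
  rw [memLp_one_iff_integrable] at h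
  exact h

lemma integral_sum_mul_sum_eval {Ω : Type*} [MeasurableSpace Ω] (P : Measure Ω)
    (s t : Finset ℕ) (a b : ℝ) (F G : ℕ → Ω → ℝ)
    (hInt : ∀ i ∈ s, ∀ j ∈ t, Integrable (fun ω => F i ω * G j ω) P)
    (I : ℕ → ℕ → ℝ) (hI : ∀ i ∈ s, ∀ j ∈ t, ∫ ω, F i ω * G j ω ∂P = I i j) :
    ∫ ω, (∑ i ∈ s, a * F i ω) * (∑ j ∈ t, b * G j ω) ∂P
      = ∑ i ∈ s, ∑ j ∈ t, (a * b) * I i j := by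
  have hpt : ∀ ω, (∑ i ∈ s, a * F i ω) * (∑ j ∈ t, b * G j ω)
      = ∑ i ∈ s, ∑ j ∈ t, (a * b) * (F i ω * G j ω) := by
    intro ω
    rw [Finset.sum_mul_sum]
    exact Finset.sum_congr rfl fun i _ => Finset.sum_congr rfl fun j _ => by ring
  calc ∫ ω, (∑ i ∈ s, a * F i ω) * (∑ j ∈ t, b * G j ω) ∂P
      = ∫ ω, ∑ i ∈ s, ∑ j ∈ t, (a * b) * (F i ω * G j ω) ∂P :=
        integral_congr_ae (Filter.Eventually.of_forall fun ω => by simpa using hpt ω)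
    _ = ∑ i ∈ s, ∑ j ∈ t, (a * b) * I i j := by
        rw [integral_finset_sum _ fun i hi => integrable_finset_sum _
          fun j hj => ((hInt i hi j hj).const_mul _)]
        refine Finset.sum_congr rfl fun i hi => ?_
        rw [integral_finset_sum _ fun j hj => ((hInt i hi j hj).const_mul _)]
        exact Finset.sum_congr rfl fun j hj => by rw [integral_const_mul, hI i hi j hj]
/-- Marginal mean estimation with the regression-function choice: in the
marginal mean estimation setting, take `φ₁` to be a measurable version of the regression
function (`φ₁(Y) = E(X | Y)` almost surely) and assume `Var(E(X|Y)) > 0`.  Then, with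
`γ* := n₁·Cov(X, φ₁(Y))/(n·Var φ₁(Y))`,
`MSE(θ̂_{γ*}) − MSE(θ̂₀) = −(n₁/(n₀·n))·Var(E(X|Y))`. -/
theorem stmt8 {Ωs : Type*} [MeasurableSpace Ωs] (P : Measure Ωs) [IsProbabilityMeasure P]
    (W : ℕ → Ωs → ℝ × ℝ) (hmeas : ∀ i, Measurable (W i))
    (hindep : iIndepFun W P)
    (hident : ∀ i, IdentDistrib (W i) (W 0) P P)
    (hL2 : MemLp (W 0) 2 P)
    (A0 A1 : Finset ℕ) (hdisj : Disjoint A0 A1)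
    (n0 n1 : ℕ) (hcard0 : A0.card = n0) (hcard1 : A1.card = n1)
    (hn0 : 1 ≤ n0) (hn1 : 1 ≤ n1)
    (φ1 : ℝ → ℝ) (hφ1 : Measurable φ1)
    (hφ1L2 : MemLp (fun ω => φ1 (W 0 ω).2) 2 P)
    -- φ₁(Y) is a version of the conditional expectation E(X | Y)
    (hreg : (fun ω => φ1 (W 0 ω).2)
      =ᵐ[P] P[(fun ω => (W 0 ω).1) |
              MeasurableSpace.comap (fun ω => (W 0 ω).2) inferInstance])
    (hvarpos : 0 < var P (P[(fun ω => (W 0 ω).1) |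
              MeasurableSpace.comap (fun ω => (W 0 ω).2) inferInstance]))
    (θ : ℝ) (hθ : θ = ∫ ω, (W 0 ω).1 ∂P)
    (θhat0 θhat01 θhat1 : Ωs → ℝ)
    (h0 : θhat0 = fun ω => (∑ i ∈ A0, (W i ω).1) / n0)
    (h01 : θhat01 = fun ω => (∑ i ∈ A0, φ1 (W i ω).2) / n0)
    (h1 : θhat1 = fun ω => (∑ i ∈ A1, φ1 (W i ω).2) / n1)
    (γstar : ℝ)
    (hγstar : γstar = n1 * cov P (fun ω => (W 0 ω).1) (fun ω => φ1 (W 0 ω).2)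
        / ((n0 + n1 : ℕ) * var P (fun ω => φ1 (W 0 ω).2))) :
    (∫ ω, (θhat0 ω - γstar * (θhat01 ω - θhat1 ω) - θ) ^ 2 ∂P)
        - (∫ ω, (θhat0 ω - θ) ^ 2 ∂P)
      = -((n1 : ℝ) / (n0 * (n0 + n1 : ℕ)))
          * var P (P[(fun ω => (W 0 ω).1) |
              MeasurableSpace.comap (fun ω => (W 0 ω).2) inferInstance]) := by
  classical
  have hn0R : ((n0 : ℝ)) ≠ 0 := Nat.cast_ne_zero.mpr (by omega)
  have hn1R : ((n1 : ℝ)) ≠ 0 := Nat.cast_ne_zero.mpr (by omega)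
  have hnR : ((n0 : ℝ) + (n1 : ℝ)) ≠ 0 := by positivity
  -- abbreviations
  set vb := var P (P[(fun ω => (W 0 ω).1) |
      MeasurableSpace.comap (fun ω => (W 0 ω).2) inferInstance]) with hvbdef
  set c := cov P (fun ω => (W 0 ω).1) (fun ω => φ1 (W 0 ω).2) with hcdef
  set v := var P (fun ω => φ1 (W 0 ω).2) with hvdef
  set m := ∫ ω, φ1 (W 0 ω).2 ∂P with hmdef
  set f : ℕ → Ωs → ℝ := fun i ω => (W i ω).1 - θ with hfdef
  set g : ℕ → Ωs → ℝ := fun i ω => φ1 (W i ω).2 - m with hgdef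
  -- measurability
  have hXm : ∀ i, Measurable fun ω => (W i ω).1 := fun i => measurable_fst.comp (hmeas i)
  have hZm : ∀ i, Measurable fun ω => φ1 (W i ω).2 :=
    fun i => hφ1.comp (measurable_snd.comp (hmeas i))
  have hfm : ∀ i, Measurable (f i) := fun i => (hXm i).sub measurable_const
  have hgm : ∀ i, Measurable (g i) := fun i => (hZm i).sub measurable_const
  have hψf : Measurable (fun p : ℝ × ℝ => p.1 - θ) := measurable_fst.sub measurable_const
  have hψg : Measurable (fun p : ℝ × ℝ => φ1 p.2 - m) :=
    (hφ1.comp measurable_snd).sub measurable_const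
  -- L² membership
  have hX0L2 : MemLp (fun ω => (W 0 ω).1) 2 P :=
    hL2.of_le ((hXm 0).aestronglyMeasurable)
      (Filter.Eventually.of_forall fun ω => norm_fst_le (W 0 ω))
  have hfid : ∀ i, IdentDistrib (f i) (f 0) P P := fun i => (hident i).comp hψf
  have hgid : ∀ i, IdentDistrib (g i) (g 0) P P := fun i => (hident i).comp hψg
  have hfL2 : ∀ i, MemLp (f i) 2 P := by
    intro i
    exact (hfid i).symm.memLp_snd ((hX0L2.sub (memLp_const θ)))
  have hgL2 : ∀ i, MemLp (g i) 2 P := by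
    intro i
    exact (hgid i).symm.memLp_snd ((hφ1L2.sub (memLp_const m)))
  have hfInt : ∀ i, Integrable (f i) P := fun i => (hfL2 i).integrable one_le_two
  have hgInt : ∀ i, Integrable (g i) P := fun i => (hgL2 i).integrable one_le_two
  -- zero means
  have hf0mean : ∫ ω, f 0 ω ∂P = 0 := by
    simp only [hfdef]
    rw [integral_sub ((hX0L2.integrable one_le_two)) (integrable_const θ), integral_const]
    simp [hθ]
  have hg0mean : ∫ ω, g 0 ω ∂P = 0 := by
    simp only [hgdef]
    rw [integral_sub ((hφ1L2.integrable one_le_two)) (integrable_const m), integral_const]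
    simp [hmdef]
  have hfmean : ∀ i, ∫ ω, f i ω ∂P = 0 := fun i => ((hfid i).integral_eq).trans hf0mean
  have hgmean : ∀ i, ∫ ω, g i ω ∂P = 0 := fun i => ((hgid i).integral_eq).trans hg0mean
  -- cross moments vanish by independence
  have hfg_ne : ∀ i j, i ≠ j → ∫ ω, f i ω * g j ω ∂P = 0 := by
    intro i j hij
    have hind : IndepFun (f i) (g j) P := (hindep.indepFun hij).comp hψf hψg
    have h2 : ∫ ω, f i ω * g j ω ∂P = (∫ ω, f i ω ∂P) * ∫ ω, g j ω ∂P :=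
      hind.integral_fun_mul_eq_mul_integral ((hfm i).aestronglyMeasurable) ((hgm j).aestronglyMeasurable)
    rw [h2, hfmean i, hgmean j, mul_zero]
  have hgg_ne : ∀ i j, i ≠ j → ∫ ω, g i ω * g j ω ∂P = 0 := by
    intro i j hij
    have hind : IndepFun (g i) (g j) P := (hindep.indepFun hij).comp hψg hψg
    have h2 : ∫ ω, g i ω * g j ω ∂P = (∫ ω, g i ω ∂P) * ∫ ω, g j ω ∂P :=
      hind.integral_fun_mul_eq_mul_integral ((hgm i).aestronglyMeasurable) ((hgm j).aestronglyMeasurable)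
    rw [h2, hgmean i, hgmean j, mul_zero]
  -- diagonal moments
  have hc : ∫ ω, f 0 ω * g 0 ω ∂P = c := by
    rw [hcdef]
    unfold cov
    simp only [hfdef, hgdef]
    rw [← hθ, ← hmdef]
  have hv : ∫ ω, g 0 ω * g 0 ω ∂P = v := by
    rw [hvdef]
    unfold var cov
    simp only [hgdef]
    rw [← hmdef]
  have hfgi : ∀ i, ∫ ω, f i ω * g i ω ∂P = c := by
    intro i
    have hid : IdentDistrib (fun ω => f i ω * g i ω) (fun ω => f 0 ω * g 0 ω) P P :=
      (hident i).comp (hψf.mul hψg)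
    exact hid.integral_eq.trans hc
  have hggi : ∀ i, ∫ ω, g i ω * g i ω ∂P = v := by
    intro i
    have hid : IdentDistrib (fun ω => g i ω * g i ω) (fun ω => g 0 ω * g 0 ω) P P :=
      (hident i).comp (hψg.mul hψg)
    exact hid.integral_eq.trans hv
  -- var of condexp equals v
  have hregm : ∫ ω, (P[(fun ω' => (W 0 ω').1) |
      MeasurableSpace.comap (fun ω => (W 0 ω).2) inferInstance]) ω ∂P = m :=
    (integral_congr_ae hreg.symm).trans hmdef.symm
  have hvb : vb = v := by
    rw [hvbdef, hvdef]
    unfold var cov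
    rw [hregm, ← hmdef]
    refine integral_congr_ae ?_
    filter_upwards [hreg] with ω hω
    rw [← hω]
  have hvne : v ≠ 0 := by
    have := hvarpos
    rw [hvb] at this
    exact ne_of_gt this
  -- tower property : c = v
  have hle : MeasurableSpace.comap (fun ω => (W 0 ω).2) inferInstance
      ≤ ‹MeasurableSpace Ωs› := (measurable_snd.comp (hmeas 0)).comap_le
  have hg0sm : StronglyMeasurable[MeasurableSpace.comap (fun ω => (W 0 ω).2) inferInstance]
      (g 0) := by
    have hY' : Measurable[MeasurableSpace.comap (fun ω => (W 0 ω).2) inferInstance]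
        (fun ω => (W 0 ω).2) := Measurable.of_comap_le le_rfl
    exact ((hφ1.comp hY').sub measurable_const).stronglyMeasurable
  have hgX : Integrable (fun ω => g 0 ω * (W 0 ω).1) P := l2_mul_integrable (hgL2 0) hX0L2
  have hgZ : Integrable (fun ω => g 0 ω * φ1 (W 0 ω).2) P := l2_mul_integrable (hgL2 0) hφ1L2
  have hsplit : ∀ (h : Ωs → ℝ) (a : ℝ), Integrable (fun ω => g 0 ω * h ω) P →
      ∫ ω, g 0 ω * (h ω - a) ∂P = ∫ ω, g 0 ω * h ω ∂P := by
    intro h a hint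
    have hpt : (fun ω => g 0 ω * (h ω - a)) = fun ω => g 0 ω * h ω - a * g 0 ω := by
      funext ω; ring
    rw [hpt, integral_sub hint ((hgInt 0).const_mul a), integral_const_mul, hg0mean,
      mul_zero, sub_zero]
  have hpull : P[(g 0) * (fun ω => (W 0 ω).1) |
      MeasurableSpace.comap (fun ω => (W 0 ω).2) inferInstance]
      =ᵐ[P] (g 0) * P[(fun ω => (W 0 ω).1) |
      MeasurableSpace.comap (fun ω => (W 0 ω).2) inferInstance] :=
    condExp_mul_of_stronglyMeasurable_left hg0sm hgX (hX0L2.integrable one_le_two)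
  have hkey : ∫ ω, g 0 ω * (W 0 ω).1 ∂P = ∫ ω, g 0 ω * φ1 (W 0 ω).2 ∂P := by
    have h1 : ∫ ω, g 0 ω * (W 0 ω).1 ∂P
        = ∫ ω, (P[(g 0) * (fun ω' => (W 0 ω').1) |
      MeasurableSpace.comap (fun ω => (W 0 ω).2) inferInstance]) ω ∂P :=
      (integral_condExp hle).symm
    have h2 : ∫ ω, (P[(g 0) * (fun ω' => (W 0 ω').1) |
      MeasurableSpace.comap (fun ω => (W 0 ω).2) inferInstance]) ω ∂P
        = ∫ ω, g 0 ω * (P[(fun ω' => (W 0 ω').1) |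
      MeasurableSpace.comap (fun ω => (W 0 ω).2) inferInstance]) ω ∂P :=
      integral_congr_ae (by filter_upwards [hpull] with ω hω; rw [hω]; rfl)
    have h3 : ∫ ω, g 0 ω * (P[(fun ω' => (W 0 ω').1) |
      MeasurableSpace.comap (fun ω => (W 0 ω).2) inferInstance]) ω ∂P
        = ∫ ω, g 0 ω * φ1 (W 0 ω).2 ∂P :=
      integral_congr_ae (by filter_upwards [hreg] with ω hω; rw [← hω])
    exact h1.trans (h2.trans h3)
  have hcv : c = v := by
    have h1 : c = ∫ ω, g 0 ω * (W 0 ω).1 ∂P := by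
      rw [← hc]
      rw [show (fun ω => f 0 ω * g 0 ω) = fun ω => g 0 ω * ((W 0 ω).1 - θ) by
        funext ω; simp only [hfdef]; ring]
      exact hsplit _ θ hgX
    have h2 : v = ∫ ω, g 0 ω * φ1 (W 0 ω).2 ∂P := by
      rw [← hv]
      rw [show (fun ω => g 0 ω * g 0 ω) = fun ω => g 0 ω * (φ1 (W 0 ω).2 - m) by
        funext ω; simp only [hgdef]]
      exact hsplit _ m hgZ
    rw [h1, h2, hkey]
  -- the normalized sums
  set S0f : Ωs → ℝ := fun ω => ∑ i ∈ A0, (1 / (n0 : ℝ)) * f i ω with hS0fdef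
  set S0g : Ωs → ℝ := fun ω => ∑ i ∈ A0, (1 / (n0 : ℝ)) * g i ω with hS0gdef
  set S1g : Ωs → ℝ := fun ω => ∑ j ∈ A1, (1 / (n1 : ℝ)) * g j ω with hS1gdef
  set D : Ωs → ℝ := fun ω => S0g ω - S1g ω with hDdef
  have hU : ∀ ω, θhat0 ω - θ = S0f ω := by
    intro ω
    simp only [h0, hS0fdef, hfdef]
    rw [← Finset.mul_sum, Finset.sum_sub_distrib, Finset.sum_const, hcard0, nsmul_eq_mul]
    field_simp
  have hD : ∀ ω, θhat01 ω - θhat1 ω = D ω := by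
    intro ω
    simp only [h01, h1, hDdef, hS0gdef, hS1gdef, hgdef]
    rw [← Finset.mul_sum, ← Finset.mul_sum, Finset.sum_sub_distrib, Finset.sum_sub_distrib,
      Finset.sum_const, Finset.sum_const, hcard0, hcard1, nsmul_eq_mul, nsmul_eq_mul]
    field_simp
    ring
  -- L² and integrability of the sums
  have hS0fL2 : MemLp S0f 2 P :=
    memLp_finset_sum A0 (fun i _ => ((hfL2 i).const_mul _))
  have hS0gL2 : MemLp S0g 2 P :=
    memLp_finset_sum A0 (fun i _ => ((hgL2 i).const_mul _))
  have hS1gL2 : MemLp S1g 2 P :=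
    memLp_finset_sum A1 (fun i _ => ((hgL2 i).const_mul _))
  have hDL2 : MemLp D 2 P := hS0gL2.sub hS1gL2
  have hUU : Integrable (fun ω => S0f ω * S0f ω) P := l2_mul_integrable hS0fL2 hS0fL2
  have hUD : Integrable (fun ω => S0f ω * D ω) P := l2_mul_integrable hS0fL2 hDL2
  have hDD : Integrable (fun ω => D ω * D ω) P := l2_mul_integrable hDL2 hDL2
  have hS0fS0g : Integrable (fun ω => S0f ω * S0g ω) P := l2_mul_integrable hS0fL2 hS0gL2
  have hS0fS1g : Integrable (fun ω => S0f ω * S1g ω) P := l2_mul_integrable hS0fL2 hS1gL2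
  have hS0gS0g : Integrable (fun ω => S0g ω * S0g ω) P := l2_mul_integrable hS0gL2 hS0gL2
  have hS0gS1g : Integrable (fun ω => S0g ω * S1g ω) P := l2_mul_integrable hS0gL2 hS1gL2
  have hS1gS1g : Integrable (fun ω => S1g ω * S1g ω) P := l2_mul_integrable hS1gL2 hS1gL2
  -- expansion of the MSE difference
  have expand : (∫ ω, (θhat0 ω - γstar * (θhat01 ω - θhat1 ω) - θ) ^ 2 ∂P)
      - (∫ ω, (θhat0 ω - θ) ^ 2 ∂P)
      = γstar * γstar * (∫ ω, D ω * D ω ∂P) - 2 * γstar * (∫ ω, S0f ω * D ω ∂P) := by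
    have hpt : ∀ ω, (θhat0 ω - γstar * (θhat01 ω - θhat1 ω) - θ) ^ 2
        = S0f ω * S0f ω - (2 * γstar) * (S0f ω * D ω) + (γstar * γstar) * (D ω * D ω) := by
      intro ω
      have e : θhat0 ω - γstar * (θhat01 ω - θhat1 ω) - θ = S0f ω - γstar * D ω := by
        rw [← hU ω, ← hD ω]; ring
      rw [e]; ring
    have hpt2 : ∀ ω, (θhat0 ω - θ) ^ 2 = S0f ω * S0f ω := by
      intro ω; rw [hU ω]; ring
    have h1 : ∫ ω, (θhat0 ω - γstar * (θhat01 ω - θhat1 ω) - θ) ^ 2 ∂P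
        = ∫ ω, (S0f ω * S0f ω - (2 * γstar) * (S0f ω * D ω)
            + (γstar * γstar) * (D ω * D ω)) ∂P :=
      integral_congr_ae (Filter.Eventually.of_forall fun ω => hpt ω)
    have h2 : ∫ ω, (θhat0 ω - θ) ^ 2 ∂P = ∫ ω, S0f ω * S0f ω ∂P :=
      integral_congr_ae (Filter.Eventually.of_forall fun ω => hpt2 ω)
    have hsub1 : Integrable (fun ω => S0f ω * S0f ω - 2 * γstar * (S0f ω * D ω)) P :=
      hUU.sub (hUD.const_mul (2 * γstar))
    rw [h1, h2, integral_add hsub1 (hDD.const_mul (γstar * γstar)),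
      integral_sub hUU (hUD.const_mul (2 * γstar)), integral_const_mul, integral_const_mul]
    ring
  -- evaluation of the base integrals
  have E1 : ∫ ω, S0f ω * S0g ω ∂P = (n0 : ℝ) * ((1 / (n0:ℝ) * (1 / (n0:ℝ))) * c) := by
    simp only [hS0fdef, hS0gdef]
    rw [integral_sum_mul_sum_eval P A0 A0 (1 / (n0:ℝ)) (1 / (n0:ℝ)) f g
      (fun i _ j _ => l2_mul_integrable (hfL2 i) (hgL2 j))
      (fun i j => if i = j then c else 0)
      (by
        intro i _ j _
        by_cases h : i = j
        · subst h; simp [hfgi i]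
        · simp [h, hfg_ne i j h])]
    have hrow : ∀ i ∈ A0, (∑ j ∈ A0, (1 / (n0:ℝ) * (1 / (n0:ℝ))) * (if i = j then c else 0))
        = (1 / (n0:ℝ) * (1 / (n0:ℝ))) * c := by
      intro i hi
      rw [Finset.sum_eq_single_of_mem i hi (fun j hj hne => by simp [(hne.symm : i ≠ j)])]
      simp
    rw [Finset.sum_congr rfl hrow, Finset.sum_const, hcard0, nsmul_eq_mul]
  have E2 : ∫ ω, S0f ω * S1g ω ∂P = 0 := by
    simp only [hS0fdef, hS1gdef]
    rw [integral_sum_mul_sum_eval P A0 A1 (1 / (n0:ℝ)) (1 / (n1:ℝ)) f g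
      (fun i _ j _ => l2_mul_integrable (hfL2 i) (hgL2 j))
      (fun _ _ => 0)
      (by
        intro i hi j hj
        refine hfg_ne i j ?_
        intro h
        exact Finset.disjoint_left.mp hdisj hi (h ▸ hj))]
    simp
  have E3 : ∫ ω, S0g ω * S0g ω ∂P = (n0 : ℝ) * ((1 / (n0:ℝ) * (1 / (n0:ℝ))) * v) := by
    simp only [hS0gdef]
    rw [integral_sum_mul_sum_eval P A0 A0 (1 / (n0:ℝ)) (1 / (n0:ℝ)) g g
      (fun i _ j _ => l2_mul_integrable (hgL2 i) (hgL2 j))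
      (fun i j => if i = j then v else 0)
      (by
        intro i _ j _
        by_cases h : i = j
        · subst h; simp [hggi i]
        · simp [h, hgg_ne i j h])]
    have hrow : ∀ i ∈ A0, (∑ j ∈ A0, (1 / (n0:ℝ) * (1 / (n0:ℝ))) * (if i = j then v else 0))
        = (1 / (n0:ℝ) * (1 / (n0:ℝ))) * v := by
      intro i hi
      rw [Finset.sum_eq_single_of_mem i hi (fun j hj hne => by simp [(hne.symm : i ≠ j)])]
      simp
    rw [Finset.sum_congr rfl hrow, Finset.sum_const, hcard0, nsmul_eq_mul]
  have E4 : ∫ ω, S0g ω * S1g ω ∂P = 0 := by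
    simp only [hS0gdef, hS1gdef]
    rw [integral_sum_mul_sum_eval P A0 A1 (1 / (n0:ℝ)) (1 / (n1:ℝ)) g g
      (fun i _ j _ => l2_mul_integrable (hgL2 i) (hgL2 j))
      (fun _ _ => 0)
      (by
        intro i hi j hj
        refine hgg_ne i j ?_
        intro h
        exact Finset.disjoint_left.mp hdisj hi (h ▸ hj))]
    simp
  have E5 : ∫ ω, S1g ω * S1g ω ∂P = (n1 : ℝ) * ((1 / (n1:ℝ) * (1 / (n1:ℝ))) * v) := by
    simp only [hS1gdef]
    rw [integral_sum_mul_sum_eval P A1 A1 (1 / (n1:ℝ)) (1 / (n1:ℝ)) g g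
      (fun i _ j _ => l2_mul_integrable (hgL2 i) (hgL2 j))
      (fun i j => if i = j then v else 0)
      (by
        intro i _ j _
        by_cases h : i = j
        · subst h; simp [hggi i]
        · simp [h, hgg_ne i j h])]
    have hrow : ∀ i ∈ A1, (∑ j ∈ A1, (1 / (n1:ℝ) * (1 / (n1:ℝ))) * (if i = j then v else 0))
        = (1 / (n1:ℝ) * (1 / (n1:ℝ))) * v := by
      intro i hi
      rw [Finset.sum_eq_single_of_mem i hi (fun j hj hne => by simp [(hne.symm : i ≠ j)])]
      simp
    rw [Finset.sum_congr rfl hrow, Finset.sum_const, hcard1, nsmul_eq_mul]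
  -- assemble the two key integrals
  have hIUD : ∫ ω, S0f ω * D ω ∂P = c / (n0 : ℝ) := by
    have hsplit2 : (fun ω => S0f ω * D ω) = fun ω => S0f ω * S0g ω - S0f ω * S1g ω := by
      funext ω; simp only [hDdef]; ring
    rw [hsplit2, integral_sub hS0fS0g hS0fS1g, E1, E2]
    field_simp
    ring
  have hIDD : ∫ ω, D ω * D ω ∂P = v / (n0 : ℝ) + v / (n1 : ℝ) := by
    have hsplit2 : (fun ω => D ω * D ω)
        = fun ω => S0g ω * S0g ω - (2:ℝ) * (S0g ω * S1g ω) + S1g ω * S1g ω := by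
      funext ω; simp only [hDdef]; ring
    have hsub1 : Integrable (fun ω => S0g ω * S0g ω - (2:ℝ) * (S0g ω * S1g ω)) P :=
      hS0gS0g.sub (hS0gS1g.const_mul (2:ℝ))
    rw [hsplit2, integral_add hsub1 hS1gS1g,
      integral_sub hS0gS0g (hS0gS1g.const_mul (2:ℝ)), integral_const_mul, E3, E4, E5]
    field_simp
    ring
  -- final algebra
  rw [expand, hIUD, hIDD, hγstar, hcv, hvb]
  push_cast
  field_simp
  ring
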